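/- For γ > 1 and fixed p₀ > 0, ρ₀ > 0, the Euler pressure wave function f (shock branch (p − p₀)*sqrt(C/(p+B)) for p > p₀, rarefaction branch (2c₀/(γ−1))*((p/p₀)^((γ−1)/(2γ)) − 1) for 0 < p ≤ p₀) satisfies f''(p) < 0 on each branch; in particular the Euler pressure function φ(p) = f(p; w_ℓ) + f(p; w_r) + u_r − u_ℓ is strictly concave wherever twice differentiable. -/

import Mathlib

noncomputable def eulerWave (γ p₀ ρ₀ : ℝ) : ℝ → ℝ := fun p =>
  if p ≤ p₀ then
    (2 * Real.sqrt (γ * p₀ / ρ₀) / (γ - 1)) * ((p / p₀) ^ ((γ - 1) / (2 * γ)) - 1)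
  else
    (p - p₀) * Real.sqrt ((2 / ((γ + 1) * ρ₀)) / (p + ((γ - 1) / (γ + 1)) * p₀))

noncomputable def eulerPressureFun (γ pl ρl pr ρr ul ur : ℝ) : ℝ → ℝ := fun p =>
  eulerWave γ pl ρl p + eulerWave γ pr ρr p + ur - ul

open Filter Real Set Topology

lemma eulerWave_key (γ p₀ ρ₀ : ℝ) (hγ : 1 < γ) (hp₀ : 0 < p₀) (hρ₀ : 0 < ρ₀)
    (p : ℝ) (hp : 0 < p) (hne : p ≠ p₀) :
    ∃ D : ℝ → ℝ, ∃ b : ℝ, b < 0 ∧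
      (∀ᶠ x in 𝓝 p, HasDerivAt (eulerWave γ p₀ ρ₀) (D x) x) ∧ HasDerivAt D b p := by
  rcases lt_or_gt_of_ne hne with hlt | hgt
  · -- rarefaction branch: 0 < p < p₀
    set K : ℝ := 2 * Real.sqrt (γ * p₀ / ρ₀) / (γ - 1) with hK
    set α : ℝ := (γ - 1) / (2 * γ) with hα
    have hγ1 : (0:ℝ) < γ - 1 := by linarith
    have hKpos : 0 < K := by
      apply div_pos _ hγ1
      have : 0 < Real.sqrt (γ * p₀ / ρ₀) :=
        Real.sqrt_pos.2 (by positivity)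
      linarith
    have hαpos : 0 < α := div_pos hγ1 (by linarith)
    have hα1 : α < 1 := (div_lt_one (by linarith)).2 (by linarith)
    -- eventual equality with rarefaction formula
    have heq : ∀ x ∈ Ioo (0:ℝ) p₀, eulerWave γ p₀ ρ₀ x =
        K * ((x / p₀) ^ α - 1) := by
      intro x hx
      simp only [eulerWave, if_pos hx.2.le]
      rfl
    have hDeriv : ∀ x ∈ Ioo (0:ℝ) p₀,
        HasDerivAt (eulerWave γ p₀ ρ₀)
          (K * (α * (x / p₀) ^ (α - 1) * (1 / p₀))) x := by
      intro x hx
      have hx0 : x / p₀ ≠ 0 := ne_of_gt (div_pos hx.1 hp₀)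
      have hdiv : HasDerivAt (fun y : ℝ => y / p₀) (1 / p₀) x := by
        simpa using (hasDerivAt_id x).div_const p₀
      have hpow : HasDerivAt (fun y : ℝ => (y / p₀) ^ α)
          (α * (x / p₀) ^ (α - 1) * (1 / p₀)) x :=
        HasDerivAt.comp x (Real.hasDerivAt_rpow_const (Or.inl hx0)) hdiv
      have hR : HasDerivAt (fun y : ℝ => K * ((y / p₀) ^ α - 1))
          (K * (α * (x / p₀) ^ (α - 1) * (1 / p₀))) x :=
        (hpow.sub_const 1).const_mul K
      apply hR.congr_of_eventuallyEq
      filter_upwards [Ioo_mem_nhds hx.1 hx.2] with y hy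
      exact heq y hy
    refine ⟨fun x => K * (α * (x / p₀) ^ (α - 1) * (1 / p₀)),
      K * (α * ((α - 1) * (p / p₀) ^ (α - 1 - 1) * (1 / p₀)) * (1 / p₀)), ?_, ?_, ?_⟩
    · have hX : (0:ℝ) < (p / p₀) ^ (α - 1 - 1) :=
        Real.rpow_pos_of_pos (div_pos hp hp₀) _
      have h1 : (α - 1) * (p / p₀) ^ (α - 1 - 1) < 0 :=
        mul_neg_of_neg_of_pos (by linarith) hX
      have h2 : (α - 1) * (p / p₀) ^ (α - 1 - 1) * (1 / p₀) < 0 :=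
        mul_neg_of_neg_of_pos h1 (by positivity)
      have h3 : α * ((α - 1) * (p / p₀) ^ (α - 1 - 1) * (1 / p₀)) < 0 :=
        mul_neg_of_pos_of_neg hαpos h2
      have h4 : α * ((α - 1) * (p / p₀) ^ (α - 1 - 1) * (1 / p₀)) * (1 / p₀) < 0 :=
        mul_neg_of_neg_of_pos h3 (by positivity)
      exact mul_neg_of_pos_of_neg hKpos h4
    · filter_upwards [Ioo_mem_nhds hp hlt] with x hx
      exact hDeriv x hx
    · have hp0 : p / p₀ ≠ 0 := ne_of_gt (div_pos hp hp₀)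
      have hdiv : HasDerivAt (fun y : ℝ => y / p₀) (1 / p₀) p := by
        simpa using (hasDerivAt_id p).div_const p₀
      have hpow : HasDerivAt (fun y : ℝ => (y / p₀) ^ (α - 1))
          ((α - 1) * (p / p₀) ^ (α - 1 - 1) * (1 / p₀)) p :=
        HasDerivAt.comp p (Real.hasDerivAt_rpow_const (Or.inl hp0)) hdiv
      exact (((hpow.const_mul α).mul_const (1 / p₀)).const_mul K)
  · -- shock branch: p₀ < p
    set C : ℝ := 2 / ((γ + 1) * ρ₀) with hCdef
    set B : ℝ := ((γ - 1) / (γ + 1)) * p₀ with hBdef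
    have hC : 0 < C := by positivity
    have hB : 0 < B := by
      apply mul_pos (div_pos (by linarith) (by linarith)) hp₀
    have heq : ∀ x, p₀ < x → eulerWave γ p₀ ρ₀ x =
        Real.sqrt C * ((x - p₀) * (x + B) ^ (-(1/2) : ℝ)) := by
      intro x hx
      have hxB : 0 < x + B := by linarith
      simp only [eulerWave, if_neg (not_le.2 hx)]
      rw [Real.sqrt_div hC.le, Real.rpow_neg hxB.le, ← Real.sqrt_eq_rpow,
        div_eq_mul_inv]
      ring
    have hDeriv : ∀ x, p₀ < x →
        HasDerivAt (eulerWave γ p₀ ρ₀)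
          (Real.sqrt C * (1 * (x + B) ^ (-(1/2) : ℝ) +
            (x - p₀) * (-(1/2) * (x + B) ^ ((-(1/2) : ℝ) - 1) * 1))) x := by
      intro x hx
      have hxB : 0 < x + B := by linarith
      have h_add : HasDerivAt (fun y : ℝ => y + B) 1 x := (hasDerivAt_id x).add_const B
      have h_comp : HasDerivAt (fun y : ℝ => (y + B) ^ (-(1/2) : ℝ))
          (-(1/2) * (x + B) ^ ((-(1/2) : ℝ) - 1) * 1) x :=
        HasDerivAt.comp x (Real.hasDerivAt_rpow_const (Or.inl hxB.ne')) h_add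
      have h_lin : HasDerivAt (fun y : ℝ => y - p₀) 1 x := (hasDerivAt_id x).sub_const p₀
      have hS := (h_lin.mul h_comp).const_mul (Real.sqrt C)
      apply hS.congr_of_eventuallyEq
      filter_upwards [eventually_gt_nhds hx] with y hy
      exact heq y hy
    refine ⟨fun x => Real.sqrt C * (1 * (x + B) ^ (-(1/2) : ℝ) +
        (x - p₀) * (-(1/2) * (x + B) ^ ((-(1/2) : ℝ) - 1) * 1)),
      Real.sqrt C * ((1 * (-(1/2) * (p + B) ^ ((-(1/2) : ℝ) - 1) * 1)) +
        (1 * (-(1/2) * (p + B) ^ ((-(1/2) : ℝ) - 1) * 1) +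
          (p - p₀) * (-(1/2) * (((-(1/2) : ℝ) - 1) * (p + B) ^ (((-(1/2) : ℝ) - 1) - 1) * 1) * 1))),
      ?_, ?_, ?_⟩
    · have hpB : 0 < p + B := by linarith
      have hv : (0:ℝ) < (p + B) ^ (((-(1/2) : ℝ) - 1) - 1) := Real.rpow_pos_of_pos hpB _
      have hu : (p + B) ^ ((-(1/2) : ℝ) - 1) =
          (p + B) ^ (((-(1/2) : ℝ) - 1) - 1) * (p + B) := by
        rw [← Real.rpow_add_one hpB.ne']
        norm_num
      have hsq : 0 < Real.sqrt C := Real.sqrt_pos.2 hC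
      rw [hu]
      have hfac : (1 * (-(1/2) * ((p + B) ^ (((-(1/2) : ℝ) - 1) - 1) * (p + B)) * 1)) +
        (1 * (-(1/2) * ((p + B) ^ (((-(1/2) : ℝ) - 1) - 1) * (p + B)) * 1) +
          (p - p₀) * (-(1/2) * (((-(1/2) : ℝ) - 1) * (p + B) ^ (((-(1/2) : ℝ) - 1) - 1) * 1) * 1)) =
          (p + B) ^ (((-(1/2) : ℝ) - 1) - 1) * ((3/4) * (p - p₀) - (p + B)) := by
        ring
      rw [hfac]
      apply mul_neg_of_pos_of_neg hsq
      apply mul_neg_of_pos_of_neg hv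
      linarith
    · filter_upwards [eventually_gt_nhds hgt] with x hx
      exact hDeriv x hx
    · have hpB : 0 < p + B := by linarith
      have h_add : HasDerivAt (fun y : ℝ => y + B) 1 p := (hasDerivAt_id p).add_const B
      have h_comp1 : HasDerivAt (fun y : ℝ => (y + B) ^ (-(1/2) : ℝ))
          (-(1/2) * (p + B) ^ ((-(1/2) : ℝ) - 1) * 1) p :=
        HasDerivAt.comp p (Real.hasDerivAt_rpow_const (Or.inl hpB.ne')) h_add
      have h_comp2 : HasDerivAt (fun y : ℝ => (y + B) ^ ((-(1/2) : ℝ) - 1))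
          (((-(1/2) : ℝ) - 1) * (p + B) ^ (((-(1/2) : ℝ) - 1) - 1) * 1) p :=
        HasDerivAt.comp p (Real.hasDerivAt_rpow_const (Or.inl hpB.ne')) h_add
      have h_lin : HasDerivAt (fun y : ℝ => y - p₀) 1 p := (hasDerivAt_id p).sub_const p₀
      have h_t1 : HasDerivAt (fun x : ℝ => 1 * (x + B) ^ (-(1/2) : ℝ))
          (1 * (-(1/2) * (p + B) ^ ((-(1/2) : ℝ) - 1) * 1)) p := h_comp1.const_mul 1
      have h_t2inner : HasDerivAt
          (fun x : ℝ => -(1/2) * (x + B) ^ ((-(1/2) : ℝ) - 1) * 1)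
          (-(1/2) * (((-(1/2) : ℝ) - 1) * (p + B) ^ (((-(1/2) : ℝ) - 1) - 1) * 1) * 1) p :=
        (h_comp2.const_mul (-(1/2))).mul_const 1
      have h_t2 := h_lin.mul h_t2inner
      have := (h_t1.add h_t2).const_mul (Real.sqrt C)
      exact this
  
lemma second_deriv_eq (f D : ℝ → ℝ) (p b : ℝ)
    (hev : ∀ᶠ x in 𝓝 p, HasDerivAt f (D x) x) (hD : HasDerivAt D b p) :
    deriv (deriv f) p = b := by
  have h1 : deriv f =ᶠ[𝓝 p] D := hev.mono fun x hx => hx.deriv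
  rw [h1.deriv_eq, hD.deriv]

theorem stmt_17 (γ p₀ ρ₀ : ℝ) (hγ : 1 < γ) (hp₀ : 0 < p₀) (hρ₀ : 0 < ρ₀) :
    ((∀ p : ℝ, p₀ < p → deriv (deriv (eulerWave γ p₀ ρ₀)) p < 0) ∧
      (∀ p : ℝ, 0 < p → p < p₀ → deriv (deriv (eulerWave γ p₀ ρ₀)) p < 0)) ∧
    (∀ pl ρl pr ρr ul ur : ℝ, 0 < pl → 0 < ρl → 0 < pr → 0 < ρr →
      ∀ p : ℝ, 0 < p → p ≠ pl → p ≠ pr →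
        deriv (deriv (eulerPressureFun γ pl ρl pr ρr ul ur)) p < 0) := by
  constructor
  · constructor
    · intro p hpp
      obtain ⟨D, b, hb, hev, hD⟩ :=
        eulerWave_key γ p₀ ρ₀ hγ hp₀ hρ₀ p (lt_trans hp₀ hpp) hpp.ne'
      rw [second_deriv_eq _ D p b hev hD]; exact hb
    · intro p hp hpp
      obtain ⟨D, b, hb, hev, hD⟩ :=
        eulerWave_key γ p₀ ρ₀ hγ hp₀ hρ₀ p hp hpp.ne
      rw [second_deriv_eq _ D p b hev hD]; exact hb
  · intro pl ρl pr ρr ul ur hpl hρl hpr hρr p hp hnl hnr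
    obtain ⟨D1, b1, hb1, hev1, hD1⟩ := eulerWave_key γ pl ρl hγ hpl hρl p hp hnl
    obtain ⟨D2, b2, hb2, hev2, hD2⟩ := eulerWave_key γ pr ρr hγ hpr hρr p hp hnr
    have hev : ∀ᶠ x in 𝓝 p,
        HasDerivAt (eulerPressureFun γ pl ρl pr ρr ul ur) (D1 x + D2 x) x := by
      filter_upwards [hev1, hev2] with x h1 h2
      exact ((h1.add h2).add_const ur).sub_const ul
    have := second_deriv_eq _ (fun x => D1 x + D2 x) p (b1 + b2) hev (hD1.add hD2)
    rw [this]; linarith
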